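/- Let a, x ∈ ℝⁿ have all components nonnegative and suppose x is weakly majorized by a. Then the sign permutation polytope of x is contained in the sign permutation polytope of a: V_{±π(x)} ⊆ V_{±π(a)}. -/

import Mathlib

open Finset

/-- The sum of the `l` largest components of `x : Fin n → ℝ`, defined as the
supremum of sums over index sets of cardinality `l`. -/
noncomputable def sumLargest {n : ℕ} (x : Fin n → ℝ) (l : ℕ) : ℝ :=
  sSup ((fun A : Finset (Fin n) => ∑ i ∈ A, x i) '' {A | A.card = l})

/-- `x` is weakly majorized by `a`: for every `1 ≤ l ≤ n` the sum of the `l`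
largest components of `x` is at most that of `a`. -/
def WeaklyMajorizes {n : ℕ} (x a : Fin n → ℝ) : Prop :=
  ∀ l, 1 ≤ l → l ≤ n → sumLargest x l ≤ sumLargest a l

/-- The set of all signed coordinate permutations of `a`. -/
def signPermSet {n : ℕ} (a : Fin n → ℝ) : Set (Fin n → ℝ) :=
  {y | ∃ (π : Equiv.Perm (Fin n)) (ε : Fin n → ℝ),
    (∀ i, ε i = 1 ∨ ε i = -1) ∧ y = fun i => ε i * a (π i)}

lemma step_anti (n : ℕ) (d : ℕ → ℝ) (hmono : ∀ k, k + 1 < n → d (k + 1) ≤ d k) :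
    ∀ j k, j ≤ k → k < n → d k ≤ d j := by
  intro j k hjk
  induction hjk with
  | refl => intro _; exact le_rfl
  | @step k h ih =>
    intro hk
    exact (hmono k hk).trans (ih (by omega))

lemma abel_sum (n : ℕ) (d v w : ℕ → ℝ)
    (hmono : ∀ k, k + 1 < n → d (k + 1) ≤ d k)
    (hpos : ∀ k, k < n → 0 ≤ d k)
    (hsum : ∀ l, 1 ≤ l → l ≤ n → ∑ k ∈ range l, v k ≤ ∑ k ∈ range l, w k) :
    ∑ k ∈ range n, d k * v k ≤ ∑ k ∈ range n, d k * w k := by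
  induction n generalizing d with
  | zero => simp
  | succ m ih =>
    have key : ∀ u : ℕ → ℝ, ∑ k ∈ range (m + 1), d k * u k
        = ∑ k ∈ range m, (d k - d m) * u k + d m * ∑ k ∈ range (m + 1), u k := by
      intro u
      have h1 : ∑ k ∈ range m, (d k - d m) * u k
          = ∑ k ∈ range m, d k * u k - d m * ∑ k ∈ range m, u k := by
        rw [Finset.mul_sum, ← Finset.sum_sub_distrib]
        exact Finset.sum_congr rfl fun k _ => by ring
      rw [h1, sum_range_succ (fun k => d k * u k), sum_range_succ u]
      ring
    rw [key v, key w]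
    have hanti := step_anti (m + 1) d hmono
    have h2 : ∑ k ∈ range m, (d k - d m) * v k ≤ ∑ k ∈ range m, (d k - d m) * w k := by
      apply ih (fun k => d k - d m)
      · intro k hk; have := hmono k (by omega); linarith
      · intro k hk
        have := hanti k m (by omega) (by omega)
        linarith
      · intro l h1 h2; exact hsum l h1 (by omega)
    have h3 : d m * ∑ k ∈ range (m + 1), v k ≤ d m * ∑ k ∈ range (m + 1), w k :=
      mul_le_mul_of_nonneg_left (hsum (m + 1) (by omega) le_rfl) (hpos m (by omega))
    linarith

lemma le_sumLargest {n : ℕ} (x : Fin n → ℝ) {l : ℕ} (B : Finset (Fin n)) (hB : B.card = l) :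
    ∑ i ∈ B, x i ≤ sumLargest x l := by
  apply le_csSup
  · exact Set.Finite.bddAbove (Set.Finite.image _ (Set.toFinite _))
  · exact ⟨B, hB, rfl⟩

lemma sumLargest_le {n : ℕ} (x : Fin n → ℝ) {l : ℕ} (hl : l ≤ n) {M : ℝ}
    (h : ∀ B : Finset (Fin n), B.card = l → ∑ i ∈ B, x i ≤ M) :
    sumLargest x l ≤ M := by
  apply csSup_le
  · obtain ⟨B, _, hB⟩ := Finset.exists_subset_card_eq
      (show l ≤ (Finset.univ : Finset (Fin n)).card by simpa using hl)
    exact ⟨∑ i ∈ B, x i, B, hB, rfl⟩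
  · rintro _ ⟨B, hB, rfl⟩; exact h B hB

/-- Any `l`-element sum is at most the sum of the top `l` entries of a sorted-decreasing
arrangement. -/
lemma sum_le_top {n l : ℕ} (hl : l ≤ n) (a : Fin n → ℝ) (ρ : Equiv.Perm (Fin n))
    (hρ : ∀ j k : Fin n, j ≤ k → a (ρ k) ≤ a (ρ j))
    (B : Finset (Fin n)) (hB : B.card = l) :
    ∑ i ∈ B, a i ≤ ∑ k : Fin l, a (ρ (Fin.castLE hl k)) := by
  rcases Nat.eq_zero_or_pos l with rfl | hl1
  · rw [Finset.card_eq_zero] at hB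
    simp [hB]
  classical
  set T : Finset (Fin n) := Finset.image (fun k : Fin l => ρ (Fin.castLE hl k)) Finset.univ with hT
  have hinj : Function.Injective (fun k : Fin l => ρ (Fin.castLE hl k)) :=
    fun u v huv => by
      have := ρ.injective huv
      exact Fin.ext (congrArg Fin.val this : (Fin.castLE hl u : ℕ) = Fin.castLE hl v)
  have hTsum : ∑ i ∈ T, a i = ∑ k : Fin l, a (ρ (Fin.castLE hl k)) :=
    Finset.sum_image (fun u _ v _ h => hinj h)
  have hTcard : T.card = l := by
    rw [hT, Finset.card_image_of_injective _ hinj, Finset.card_univ, Fintype.card_fin]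
  rw [← hTsum]
  have hsplitB := Finset.sum_inter_add_sum_sdiff B T a
  have hsplitT := Finset.sum_inter_add_sum_sdiff T B a
  have hcard : (B \ T).card = (T \ B).card :=
    Finset.card_sdiff_comm (by rw [hB, hTcard])
  have hlast : l - 1 < n := by omega
  set L : Fin n := ρ ⟨l - 1, hlast⟩ with hLdef
  have hBT : ∀ i ∈ B \ T, a i ≤ a L := by
    intro i hi
    have hiT : i ∉ T := (Finset.mem_sdiff.mp hi).2
    set k : Fin n := ρ.symm i with hk
    have hik : i = ρ k := by rw [hk, Equiv.apply_symm_apply]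
    have hkl : ¬ (k : ℕ) < l := by
      intro hkl
      apply hiT
      rw [hT, Finset.mem_image]
      refine ⟨⟨k, hkl⟩, Finset.mem_univ _, ?_⟩
      rw [hik]
      congr 1
    rw [hik, hLdef]
    exact hρ _ _ (by simp only [Fin.le_def]; omega)
  have hTB : ∀ i ∈ T \ B, a L ≤ a i := by
    intro i hi
    have hiT : i ∈ T := (Finset.mem_sdiff.mp hi).1
    rw [hT, Finset.mem_image] at hiT
    obtain ⟨k, _, rfl⟩ := hiT
    rw [hLdef]
    exact hρ _ _ (by simp only [Fin.le_def, Fin.coe_castLE]; omega)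
  have h1 : ∑ i ∈ B \ T, a i ≤ (B \ T).card • a L := Finset.sum_le_card_nsmul _ _ _ hBT
  have h2 : (T \ B).card • a L ≤ ∑ i ∈ T \ B, a i := Finset.card_nsmul_le_sum _ _ _ hTB
  rw [hcard] at h1
  have hint : ∑ i ∈ B ∩ T, a i = ∑ i ∈ T ∩ B, a i := by rw [Finset.inter_comm]
  linarith

lemma finite_signPermSet {n : ℕ} (a : Fin n → ℝ) : (signPermSet a).Finite := by
  classical
  apply Set.Finite.subset (Set.finite_range (fun p : Equiv.Perm (Fin n) × (Fin n → Bool) =>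
      fun i => (if p.2 i then (1 : ℝ) else -1) * a (p.1 i)))
  rintro y ⟨π, ε, hε, rfl⟩
  refine ⟨(π, fun i => if ε i = 1 then true else false), ?_⟩
  funext i
  rcases hε i with h | h
  · simp [h]
  · simp [h]
    intro h'
    norm_num at h'

lemma key_ineq {n : ℕ} (a x : Fin n → ℝ) (hx : ∀ i, 0 ≤ x i)
    (hxa : WeaklyMajorizes x a) (c : Fin n → ℝ) {z : Fin n → ℝ} (hz : z ∈ signPermSet x) :
    ∃ y ∈ signPermSet a, ∑ i, c i * z i ≤ ∑ i, c i * y i := by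
  classical
  obtain ⟨π, ε, hε, rfl⟩ := hz
  set τ : Equiv.Perm (Fin n) := Tuple.sort (fun i => -|c i|) with hτdef
  have hτ : ∀ j k : Fin n, j ≤ k → |c (τ k)| ≤ |c (τ j)| := by
    intro j k hjk
    have := Tuple.monotone_sort (fun i => -|c i|) hjk
    simp only [Function.comp_apply] at this
    linarith
  set ρ : Equiv.Perm (Fin n) := Tuple.sort (fun i => -(a i)) with hρdef
  have hρ : ∀ j k : Fin n, j ≤ k → a (ρ k) ≤ a (ρ j) := by
    intro j k hjk
    have := Tuple.monotone_sort (fun i => -(a i)) hjk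
    simp only [Function.comp_apply] at this
    linarith
  set s : Fin n → ℝ := fun i => if 0 ≤ c i then 1 else -1 with hs
  refine ⟨fun i => s i * a ((τ.symm.trans ρ) i),
    ⟨τ.symm.trans ρ, s, fun i => by by_cases h : 0 ≤ c i <;> simp [hs, h], rfl⟩, ?_⟩
  have habs : ∀ i, c i * s i = |c i| := by
    intro i; by_cases h : 0 ≤ c i
    · simp [hs, h, abs_of_nonneg h]
    · push_neg at h
      simp only [hs, if_neg (not_le.mpr h), abs_of_neg h]
      ring
  have hR : ∑ i, c i * (s i * a ((τ.symm.trans ρ) i)) = ∑ k, |c (τ k)| * a (ρ k) := by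
    rw [← Equiv.sum_comp τ (fun i => c i * (s i * a ((τ.symm.trans ρ) i)))]
    apply Finset.sum_congr rfl
    intro k _
    simp only [Equiv.trans_apply, Equiv.symm_apply_apply, ← mul_assoc, habs]
  have hL1 : ∑ i, c i * (ε i * x (π i)) ≤ ∑ i, |c i| * x (π i) := by
    apply Finset.sum_le_sum
    intro i _
    rw [← mul_assoc]
    apply mul_le_mul_of_nonneg_right _ (hx _)
    calc c i * ε i ≤ |c i * ε i| := le_abs_self _
      _ = |c i| := by rcases hε i with h | h <;> simp [h, abs_mul]
  have hL2 : ∑ i, |c i| * x (π i) = ∑ k, |c (τ k)| * x (π (τ k)) :=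
    (Equiv.sum_comp τ (fun i => |c i| * x (π i))).symm
  set d' : ℕ → ℝ := fun k => if h : k < n then |c (τ ⟨k, h⟩)| else 0 with hd'
  set v' : ℕ → ℝ := fun k => if h : k < n then x (π (τ ⟨k, h⟩)) else 0 with hv'
  set w' : ℕ → ℝ := fun k => if h : k < n then a (ρ ⟨k, h⟩) else 0 with hw'
  have habel : ∑ k ∈ range n, d' k * v' k ≤ ∑ k ∈ range n, d' k * w' k := by
    apply abel_sum
    · intro k hk
      rw [hd']
      simp only [dif_pos hk, dif_pos (show k < n by omega)]
      exact hτ _ _ (by simp [Fin.le_def])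
    · intro k hk
      rw [hd']
      simp only [dif_pos hk]
      exact abs_nonneg _
    · intro l h1 h2
      have hv : ∑ k ∈ range l, v' k = ∑ k : Fin l, x (π (τ (Fin.castLE h2 k))) := by
        rw [← Fin.sum_univ_eq_sum_range v' l]
        apply Finset.sum_congr rfl
        intro k _
        have hkn : (k : ℕ) < n := lt_of_lt_of_le k.isLt h2
        rw [hv']
        simp only [dif_pos hkn]
        congr 1
      have hw : ∑ k ∈ range l, w' k = ∑ k : Fin l, a (ρ (Fin.castLE h2 k)) := by
        rw [← Fin.sum_univ_eq_sum_range w' l]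
        apply Finset.sum_congr rfl
        intro k _
        have hkn : (k : ℕ) < n := lt_of_lt_of_le k.isLt h2
        rw [hw']
        simp only [dif_pos hkn]
        congr 1
      rw [hv, hw]
      set B : Finset (Fin n) := Finset.image (fun k : Fin l => π (τ (Fin.castLE h2 k)))
        Finset.univ with hBdef
      have hinj : Function.Injective (fun k : Fin l => π (τ (Fin.castLE h2 k))) := by
        intro u v huv
        have := τ.injective (π.injective huv)
        exact Fin.ext (congrArg Fin.val this : (Fin.castLE h2 u : ℕ) = Fin.castLE h2 v)
      have hBsum : ∑ i ∈ B, x i = ∑ k : Fin l, x (π (τ (Fin.castLE h2 k))) :=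
        Finset.sum_image (fun u _ v _ h => hinj h)
      have hBcard : B.card = l := by
        rw [hBdef, Finset.card_image_of_injective _ hinj, Finset.card_univ, Fintype.card_fin]
      calc ∑ k : Fin l, x (π (τ (Fin.castLE h2 k))) = ∑ i ∈ B, x i := hBsum.symm
        _ ≤ sumLargest x l := le_sumLargest x B hBcard
        _ ≤ sumLargest a l := hxa l h1 h2
        _ ≤ ∑ k : Fin l, a (ρ (Fin.castLE h2 k)) :=
            sumLargest_le a h2 (fun C hC => sum_le_top h2 a ρ hρ C hC)
  have hfin1 : ∑ k : Fin n, |c (τ k)| * x (π (τ k)) = ∑ k ∈ range n, d' k * v' k := by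
    rw [← Fin.sum_univ_eq_sum_range (fun k => d' k * v' k) n]
    apply Finset.sum_congr rfl
    intro k _
    rw [hd', hv']
    simp only [dif_pos k.isLt, Fin.eta]
  have hfin2 : ∑ k ∈ range n, d' k * w' k = ∑ k : Fin n, |c (τ k)| * a (ρ k) := by
    rw [← Fin.sum_univ_eq_sum_range (fun k => d' k * w' k) n]
    apply Finset.sum_congr rfl
    intro k _
    rw [hd', hw']
    simp only [dif_pos k.isLt, Fin.eta]
  calc ∑ i, c i * (ε i * x (π i)) ≤ ∑ i, |c i| * x (π i) := hL1
    _ = ∑ k ∈ range n, d' k * v' k := by rw [hL2, hfin1]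
    _ ≤ ∑ k ∈ range n, d' k * w' k := habel
    _ = ∑ k, |c (τ k)| * a (ρ k) := hfin2
    _ = ∑ i, c i * (s i * a ((τ.symm.trans ρ) i)) := hR.symm

/-- If `x` is weakly majorized by `a` (both with nonnegative components), then the
sign permutation polytope of `x` is contained in that of `a`. -/
theorem signPermPolytope_subset (n : ℕ) (a x : Fin n → ℝ)
    (ha : ∀ i, 0 ≤ a i) (hx : ∀ i, 0 ≤ x i) (hxa : WeaklyMajorizes x a) :
    convexHull ℝ (signPermSet x) ⊆ convexHull ℝ (signPermSet a) := by
  classical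
  apply convexHull_min _ (convex_convexHull ℝ _)
  intro z hz
  by_contra hzC
  have hcomp : IsCompact (convexHull ℝ (signPermSet a)) :=
    (finite_signPermSet a).isCompact_convexHull ℝ
  obtain ⟨f, u, hfu, huz⟩ :=
    geometric_hahn_banach_closed_point (convex_convexHull ℝ _) hcomp.isClosed hzC
  set c : Fin n → ℝ := fun i => f (fun j => if i = j then 1 else 0) with hc
  obtain ⟨y, hy, hle⟩ := key_ineq a x hx hxa c hz
  have hplin : ∀ g : Fin n → ℝ, f g = ∑ i, c i * g i := by
    intro g
    have h := LinearMap.pi_apply_eq_sum_univ (f : (Fin n → ℝ) →ₗ[ℝ] ℝ) g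
    simp only [ContinuousLinearMap.coe_coe] at h
    rw [h]
    apply Finset.sum_congr rfl
    intro i _
    rw [smul_eq_mul, mul_comm]
  have h1 : f y < u := hfu y (subset_convexHull ℝ _ hy)
  rw [hplin y] at h1
  rw [hplin z] at huz
  linarith
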